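/- Assume S has no conjugate points. For all x, y, z ∈ ℝ^d and all integers N, N' ≥ 1, one has the triangular inequality A_{N+N'}(x,z) ≤ A_N(x,y) + A_{N'}(y,z); moreover, equality holds if and only if y = w_N, where (w_n)_{n∈ℤ} is the unique extremal sequence with w_0 = x and w_{N+N'} = z. -/

import Mathlib

noncomputable section

/-- Configuration space `ℝ^d` with the Euclidean norm. -/
abbrev Ed (d : ℕ) := EuclideanSpace ℝ (Fin d)

/-- The point of `ℝ^d` with integer coordinates given by `r ∈ ℤ^d`. -/
def intVec (d : ℕ) (r : Fin d → ℤ) : Ed d := WithLp.toLp 2 (fun i => (r i : ℝ))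

/-- A generating function: a `C²` map `S : ℝ^d × ℝ^d → ℝ` which is `ℤ^d`-periodic for
the diagonal action and satisfies the uniform twist condition
`∑_{i,j} ∂²S/∂xᵢ∂yⱼ (x,y) ξᵢ ξⱼ ≤ -A‖ξ‖²` (expressed via the second derivative of `S`
applied to `((ξ,0),(0,ξ))`). -/
def IsGenFn {d : ℕ} (S : Ed d × Ed d → ℝ) : Prop :=
  ContDiff ℝ 2 S ∧
  (∀ (r : Fin d → ℤ) (x y : Ed d), S (x + intVec d r, y + intVec d r) = S (x, y)) ∧
  ∃ A : ℝ, 0 < A ∧ ∀ (x y ξ : Ed d),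
    iteratedFDeriv ℝ 2 S (x, y) ![(ξ, 0), (0, ξ)] ≤ -A * ‖ξ‖ ^ 2

/-- `∂₁S`, the partial differential of `S` with respect to its first variable. -/
def D1 {d : ℕ} (S : Ed d × Ed d → ℝ) (x y : Ed d) : Ed d →L[ℝ] ℝ :=
  fderiv ℝ (fun z => S (z, y)) x

/-- `∂₂S`, the partial differential of `S` with respect to its second variable. -/
def D2 {d : ℕ} (S : Ed d × Ed d → ℝ) (x y : Ed d) : Ed d →L[ℝ] ℝ :=
  fderiv ℝ (fun z => S (x, z)) y

/-- A bi-infinite sequence `(x_n)_{n∈ℤ}` is extremal if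
`∂₂S(x_{n-1}, x_n) + ∂₁S(x_n, x_{n+1}) = 0` for every `n`. -/
def IsExtremal {d : ℕ} (S : Ed d × Ed d → ℝ) (u : ℤ → Ed d) : Prop :=
  ∀ n : ℤ, D2 S (u (n - 1)) (u n) + D1 S (u n) (u (n + 1)) = 0

/-- The action `S(x_0, …, x_n)` of a finite sequence. -/
def act {d : ℕ} (S : Ed d × Ed d → ℝ) (n : ℕ) (γ : ℕ → Ed d) : ℝ :=
  ∑ k ∈ Finset.range n, S (γ k, γ (k + 1))

/-- The sequence `(x, z_1, …, z_{N-1}, y)` built from interior points `z`. -/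
def path {d : ℕ} (x y : Ed d) (N : ℕ) (z : Fin (N - 1) → Ed d) : ℕ → Ed d :=
  fun k => if h0 : k = 0 then x else if h : k < N then z ⟨k - 1, by omega⟩ else y

/-- The fixed-endpoint action `S_{x,y,N} : (x_1, …, x_{N-1}) ↦ S(x, x_1, …, x_{N-1}, y)`. -/
def fixedAct {d : ℕ} (S : Ed d × Ed d → ℝ) (x y : Ed d) (N : ℕ) :
    (Fin (N - 1) → Ed d) → ℝ :=
  fun z => act S N (path x y N z)

/-- `S` has no conjugate points: for all `x, y` and `N ≥ 2`, the fixed-endpoint action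
`S_{x,y,N}` has exactly one critical point, and attains its global minimum there. -/
def NoConjPts {d : ℕ} (S : Ed d × Ed d → ℝ) : Prop :=
  ∀ (x y : Ed d) (N : ℕ), 2 ≤ N →
    ∃ z : Fin (N - 1) → Ed d,
      fderiv ℝ (fixedAct S x y N) z = 0 ∧
      (∀ w, fixedAct S x y N z ≤ fixedAct S x y N w) ∧
      (∀ z', fderiv ℝ (fixedAct S x y N) z' = 0 → z' = z)

/-- `A_N(x,y)`: the minimum of the fixed-endpoint action `S_{x,y,N}` for `N ≥ 2`,
and `S(x,y)` for `N = 1`. -/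
def AN {d : ℕ} (S : Ed d × Ed d → ℝ) (N : ℕ) (x y : Ed d) : ℝ :=
  if N ≤ 1 then S (x, y) else sInf (Set.range (fixedAct S x y N))

/-- The minimizing holonomic value `Σ̃(S)`. -/
def holVal {d : ℕ} (S : Ed d × Ed d → ℝ) : ℝ :=
  sInf { v : ℝ | ∃ n : ℕ, 1 ≤ n ∧ ∃ γ : ℕ → Ed d,
    (∃ r : Fin d → ℤ, γ n - γ 0 = intVec d r) ∧ v = act S n γ / n }

/-- The normalized action `S̃(x_0, …, x_n) = S(x_0, …, x_n) - n Σ̃(S)`. -/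
def actTilde {d : ℕ} (S : Ed d × Ed d → ℝ) (n : ℕ) (γ : ℕ → Ed d) : ℝ :=
  act S n γ - n * holVal S

/-- The Mañé potential `π(x,y)`. -/
def manePot {d : ℕ} (S : Ed d × Ed d → ℝ) (x y : Ed d) : ℝ :=
  sInf { v : ℝ | ∃ n : ℕ, 1 ≤ n ∧ ∃ γ : ℕ → Ed d,
    γ 0 = x ∧ (∃ r : Fin d → ℤ, γ n - y = intVec d r) ∧ v = actTilde S n γ }

/-- The Aubry set `Ā(S) ⊂ ℝ^d × ℝ^d`. -/
def aubry {d : ℕ} (S : Ed d × Ed d → ℝ) : Set (Ed d × Ed d) :=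
  { p | ∀ ε > 0, ∃ n : ℕ, 1 ≤ n ∧ ∃ γ : ℕ → Ed d,
      (∃ r : Fin d → ℤ, γ n - γ 0 = intVec d r) ∧
      ‖p.1 - γ 0‖ < ε ∧ ‖p.2 - γ 1‖ < ε ∧ actTilde S n γ < ε }

/-- The generating function `S_c(x,y) = S(x,y) + c(x - y)` associated to a cohomology
class `c ∈ (ℝ^d)*`. -/
def Sc {d : ℕ} (S : Ed d × Ed d → ℝ) (c : Ed d →L[ℝ] ℝ) : Ed d × Ed d → ℝ :=
  fun p => S p + c (p.1 - p.2)


namespace StmtAux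

variable {d : ℕ}

lemma hasFDerivAt_S {S : Ed d × Ed d → ℝ} (hS : ContDiff ℝ 2 S) (p : Ed d × Ed d) :
    HasFDerivAt S (fderiv ℝ S p) p :=
  ((hS.differentiable (by norm_num)) p).hasFDerivAt

lemma fderiv_decomp {S : Ed d × Ed d → ℝ} (hS : ContDiff ℝ 2 S) (a b u v : Ed d) :
    fderiv ℝ S (a, b) (u, v) = D1 S a b u + D2 S a b v := by
  have h1 : HasFDerivAt (fun w => S (w, b))
      ((fderiv ℝ S (a, b)).comp ((ContinuousLinearMap.id ℝ (Ed d)).prod 0)) a :=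
    (hasFDerivAt_S hS (a, b)).comp a (HasFDerivAt.prodMk (hasFDerivAt_id a) (hasFDerivAt_const b a))
  have h2 : HasFDerivAt (fun w => S (a, w))
      ((fderiv ℝ S (a, b)).comp
        ((0 : Ed d →L[ℝ] Ed d).prod (ContinuousLinearMap.id ℝ (Ed d)))) b :=
    (hasFDerivAt_S hS (a, b)).comp b (HasFDerivAt.prodMk (hasFDerivAt_const a b) (hasFDerivAt_id b))
  have e1 : D1 S a b u = fderiv ℝ S (a, b) (u, 0) := by rw [D1, h1.fderiv]; rfl
  have e2 : D2 S a b v = fderiv ℝ S (a, b) (0, v) := by rw [D2, h2.fderiv]; rfl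
  rw [e1, e2, ← map_add]
  congr 1
  simp

def DP (d M k : ℕ) : (Fin (M - 1) → Ed d) →L[ℝ] Ed d :=
  if h : 0 < k ∧ k < M then ContinuousLinearMap.proj (⟨k - 1, by omega⟩ : Fin (M - 1)) else 0

def pc (x y : Ed d) (M k : ℕ) : Ed d := if k = 0 then x else if k < M then 0 else y

lemma path_eq_affine (x y : Ed d) (M : ℕ) (z : Fin (M - 1) → Ed d) (k : ℕ) :
    path x y M z k = DP d M k z + pc x y M k := by
  unfold path DP pc
  split_ifs with h1 h2 h3 h3 <;> simp_all <;> omega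

lemma hasFDerivAt_pathk (x y : Ed d) (M : ℕ) (z : Fin (M - 1) → Ed d) (k : ℕ) :
    HasFDerivAt (fun z : Fin (M - 1) → Ed d => path x y M z k) (DP d M k) z := by
  have e : (fun z : Fin (M - 1) → Ed d => path x y M z k)
      = fun z => DP d M k z + pc x y M k := funext fun z => path_eq_affine x y M z k
  rw [e]
  exact (DP d M k).hasFDerivAt.add_const _

def Fd (S : Ed d × Ed d → ℝ) (x y : Ed d) (M : ℕ) (z : Fin (M - 1) → Ed d) :
    (Fin (M - 1) → Ed d) →L[ℝ] ℝ :=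
  ∑ k ∈ Finset.range M,
    (fderiv ℝ S (path x y M z k, path x y M z (k + 1))).comp ((DP d M k).prod (DP d M (k + 1)))

lemma hasFDerivAt_fixedAct {S : Ed d × Ed d → ℝ} (hS : ContDiff ℝ 2 S) (x y : Ed d)
    (M : ℕ) (z : Fin (M - 1) → Ed d) :
    HasFDerivAt (fixedAct S x y M) (Fd S x y M z) z := by
  have e : fixedAct S x y M
      = fun z => ∑ k ∈ Finset.range M, S (path x y M z k, path x y M z (k + 1)) := rfl
  rw [e, Fd]
  exact HasFDerivAt.fun_sum fun k _ =>
    (hasFDerivAt_S hS _).comp z (HasFDerivAt.prodMk (hasFDerivAt_pathk x y M z k) (hasFDerivAt_pathk x y M z (k + 1)))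

lemma DP_single (M k : ℕ) (j : Fin (M - 1)) (ξ : Ed d) :
    DP d M k (Pi.single j ξ) = if k = (j : ℕ) + 1 then ξ else 0 := by
  have hj := j.isLt
  unfold DP
  split_ifs with h h2 h2
  · have e : (⟨k - 1, by omega⟩ : Fin (M - 1)) = j := Fin.ext (by simp; omega)
    simp [e]
  · have e : (⟨k - 1, by omega⟩ : Fin (M - 1)) ≠ j := by
      intro e
      exact h2 (by have := congrArg Fin.val e; simp at this; omega)
    simp [Pi.single_apply, e]
  · omega
  · rfl

lemma Fd_single {S : Ed d × Ed d → ℝ} (hS : ContDiff ℝ 2 S) (x y : Ed d) (M : ℕ)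
    (z : Fin (M - 1) → Ed d) (j : Fin (M - 1)) (ξ : Ed d) :
    Fd S x y M z (Pi.single j ξ)
      = (D2 S (path x y M z j) (path x y M z ((j : ℕ) + 1))
          + D1 S (path x y M z ((j : ℕ) + 1)) (path x y M z ((j : ℕ) + 2))) ξ := by
  have hj := j.isLt
  rw [Fd, ContinuousLinearMap.sum_apply]
  have step : ∀ k ∈ Finset.range M,
      ((fderiv ℝ S (path x y M z k, path x y M z (k + 1))).comp
        ((DP d M k).prod (DP d M (k + 1)))) (Pi.single j ξ)
      = (if k = (j : ℕ) then D2 S (path x y M z j) (path x y M z ((j : ℕ) + 1)) ξ else 0)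
        + (if k = (j : ℕ) + 1 then
            D1 S (path x y M z ((j : ℕ) + 1)) (path x y M z ((j : ℕ) + 2)) ξ else 0) := by
    intro k hk
    rw [ContinuousLinearMap.comp_apply, ContinuousLinearMap.prod_apply,
      fderiv_decomp hS, DP_single, DP_single]
    rcases eq_or_ne k ((j : ℕ)) with rfl | h
    · rw [if_neg (by omega), if_pos (by omega), if_pos rfl, if_neg (by omega)]
      simp
    · rcases eq_or_ne k ((j : ℕ) + 1) with rfl | h'
      · rw [if_pos rfl, if_neg (by omega), if_neg h, if_pos rfl]
        simp
      · rw [if_neg h', if_neg (by omega), if_neg h, if_neg h']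
        simp
  rw [Finset.sum_congr rfl step, Finset.sum_add_distrib,
    Finset.sum_ite_eq' (Finset.range M) ((j : ℕ)),
    Finset.sum_ite_eq' (Finset.range M) ((j : ℕ) + 1),
    if_pos (Finset.mem_range.2 (by omega)), if_pos (Finset.mem_range.2 (by omega)),
    ContinuousLinearMap.add_apply]

lemma crit_iff {S : Ed d × Ed d → ℝ} (hS : ContDiff ℝ 2 S) (x y : Ed d) (M : ℕ)
    (z : Fin (M - 1) → Ed d) :
    fderiv ℝ (fixedAct S x y M) z = 0 ↔
      ∀ j : Fin (M - 1),
        D2 S (path x y M z j) (path x y M z ((j : ℕ) + 1))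
          + D1 S (path x y M z ((j : ℕ) + 1)) (path x y M z ((j : ℕ) + 2)) = 0 := by
  rw [(hasFDerivAt_fixedAct hS x y M z).fderiv]
  constructor
  · intro h0 j
    ext ξ
    have := congrArg (fun L : (Fin (M - 1) → Ed d) →L[ℝ] ℝ => L (Pi.single j ξ)) h0
    simpa [Fd_single hS] using this
  · intro hEL
    ext v
    have e : v = ∑ i, Pi.single i (v i) := (Finset.univ_sum_single v).symm
    rw [e, map_sum]
    simp [Fd_single hS, hEL]

lemma path_restrict (x y : Ed d) (M : ℕ) (u : ℕ → Ed d) (h0 : u 0 = x) (hM : u M = y)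
    {k : ℕ} (hk : k ≤ M) :
    path x y M (fun j : Fin (M - 1) => u ((j : ℕ) + 1)) k = u k := by
  unfold path
  split_ifs with e1 e2
  · subst e1; exact h0.symm
  · exact congrArg u (by simp only [Fin.val_mk]; omega)
  · have : k = M := by omega
    subst this; exact hM.symm

def glue {N N' : ℕ} (y : Ed d) (z1 : Fin (N - 1) → Ed d) (z2 : Fin (N' - 1) → Ed d) :
    Fin (N + N' - 1) → Ed d :=
  fun i => if h : (i : ℕ) < N - 1 then z1 ⟨i, h⟩
    else if h2 : (i : ℕ) = N - 1 then y
    else z2 ⟨(i : ℕ) - N, by have := i.isLt; omega⟩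

lemma glue_path_left {N N' : ℕ} (hN : 1 ≤ N) (hN' : 1 ≤ N') (x y z : Ed d)
    (z1 : Fin (N - 1) → Ed d) (z2 : Fin (N' - 1) → Ed d) {k : ℕ} (hk : k ≤ N) :
    path x z (N + N') (glue y z1 z2) k = path x y N z1 k := by
  unfold path glue
  simp only [Fin.val_mk]
  split_ifs <;> first | rfl | omega | (exfalso; omega)

lemma glue_path_right {N N' : ℕ} (hN : 1 ≤ N) (hN' : 1 ≤ N') (x y z : Ed d)
    (z1 : Fin (N - 1) → Ed d) (z2 : Fin (N' - 1) → Ed d) {k : ℕ} (hk : N ≤ k) :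
    path x z (N + N') (glue y z1 z2) k = path y z N' z2 (k - N) := by
  unfold path glue
  simp only [Fin.val_mk]
  split_ifs <;>
    first
      | rfl
      | omega
      | (exfalso; omega)
      | (exact congrArg z2 (Fin.ext (by simp only [Fin.val_mk]; omega)))

lemma concat {S : Ed d × Ed d → ℝ} {N N' : ℕ} (hN : 1 ≤ N) (hN' : 1 ≤ N') (x y z : Ed d)
    (z1 : Fin (N - 1) → Ed d) (z2 : Fin (N' - 1) → Ed d) :
    fixedAct S x z (N + N') (glue y z1 z2) = fixedAct S x y N z1 + fixedAct S y z N' z2 := by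
  unfold fixedAct act
  rw [Finset.sum_range_add]
  congr 1
  · refine Finset.sum_congr rfl fun k hk => ?_
    rw [Finset.mem_range] at hk
    rw [glue_path_left hN hN' x y z z1 z2 (k := k) (by omega),
      glue_path_left hN hN' x y z z1 z2 (k := k + 1) (by omega)]
  · refine Finset.sum_congr rfl fun k hk => ?_
    rw [Finset.mem_range] at hk
    rw [glue_path_right hN hN' x y z z1 z2 (k := N + k) (by omega),
      glue_path_right hN hN' x y z z1 z2 (k := N + k + 1) (by omega)]
    have e1 : N + k - N = k := by omega
    have e2 : N + k + 1 - N = k + 1 := by omega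
    rw [e1, e2]

lemma fixedAct_one (S : Ed d × Ed d → ℝ) (a b : Ed d) (w : Fin 0 → Ed d) :
    fixedAct S a b 1 w = S (a, b) := by
  simp [fixedAct, act, path]

lemma AN_attained {S : Ed d × Ed d → ℝ} (h : NoConjPts S) (a b : Ed d) {N : ℕ} (hN : 1 ≤ N) :
    ∃ c : Fin (N - 1) → Ed d, AN S N a b = fixedAct S a b N c ∧
      ∀ w, fixedAct S a b N c ≤ fixedAct S a b N w := by
  rcases eq_or_lt_of_le hN with h1 | h2
  · subst h1
    exact ⟨fun _ => a, by rw [AN, if_pos le_rfl, fixedAct_one], fun w => by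
      rw [fixedAct_one, fixedAct_one]⟩
  · obtain ⟨c, _, hc2, _⟩ := h a b N h2
    refine ⟨c, ?_, hc2⟩
    rw [AN, if_neg (by omega)]
    exact IsLeast.csInf_eq ⟨⟨c, rfl⟩, by rintro v ⟨w, rfl⟩; exact hc2 w⟩

lemma AN_le {S : Ed d × Ed d → ℝ} (h : NoConjPts S) (a b : Ed d) {N : ℕ} (hN : 1 ≤ N)
    (w : Fin (N - 1) → Ed d) : AN S N a b ≤ fixedAct S a b N w := by
  obtain ⟨c, e, m⟩ := AN_attained h a b hN
  rw [e]; exact m w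

lemma triangle {S : Ed d × Ed d → ℝ} (h : NoConjPts S) (x y z : Ed d) {N N' : ℕ}
    (hN : 1 ≤ N) (hN' : 1 ≤ N') :
    AN S (N + N') x z ≤ AN S N x y + AN S N' y z := by
  obtain ⟨c1, e1, m1⟩ := AN_attained h x y hN
  obtain ⟨c2, e2, m2⟩ := AN_attained h y z hN'
  calc AN S (N + N') x z ≤ fixedAct S x z (N + N') (glue y c1 c2) :=
        AN_le h x z (by omega) _
    _ = AN S N x y + AN S N' y z := by rw [concat hN hN', e1, e2]

end StmtAux

open StmtAux in
/-- Triangular inequality `A_{N+N'}(x,z) ≤ A_N(x,y) + A_{N'}(y,z)`, with equality if and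
only if `y = w_N`, where `(w_n)` is the (unique) extremal sequence with `w_0 = x` and
`w_{N+N'} = z`. -/
theorem stmt_8 (d : ℕ) (hd : 1 ≤ d) (S : Ed d × Ed d → ℝ) (hS : IsGenFn S)
    (h : NoConjPts S) (x y z : Ed d) (N N' : ℕ) (hN : 1 ≤ N) (hN' : 1 ≤ N') :
    AN S (N + N') x z ≤ AN S N x y + AN S N' y z ∧
    ∀ w : ℤ → Ed d, IsExtremal S w → w 0 = x → w ((N : ℤ) + N') = z →
      (AN S (N + N') x z = AN S N x y + AN S N' y z ↔ y = w (N : ℤ)) := by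
  have hC2 := hS.1
  have hM2 : 2 ≤ N + N' := by omega
  obtain ⟨c, hc0, hcmin, hcuniq⟩ := h x z (N + N') hM2
  have hANM : AN S (N + N') x z = fixedAct S x z (N + N') c := by
    rw [AN, if_neg (by omega)]
    exact IsLeast.csInf_eq ⟨⟨c, rfl⟩, by rintro v ⟨w, rfl⟩; exact hcmin w⟩
  refine ⟨triangle h x y z hN hN', ?_⟩
  intro w hw hw0 hwM
  set u : ℕ → Ed d := fun k => w (k : ℤ) with hu
  have hu0 : u 0 = x := by simpa [hu] using hw0
  have huM : u (N + N') = z := by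
    have e : ((N + N' : ℕ) : ℤ) = (N : ℤ) + N' := by push_cast; ring
    simpa [hu, e] using hwM
  set zw : Fin (N + N' - 1) → Ed d := fun j => u ((j : ℕ) + 1) with hzw
  have hcrit : fderiv ℝ (fixedAct S x z (N + N')) zw = 0 := by
    rw [crit_iff hC2]
    intro j
    have hj := j.isLt
    rw [hzw, path_restrict x z (N + N') u hu0 huM (k := (j : ℕ)) (by omega),
        path_restrict x z (N + N') u hu0 huM (k := (j : ℕ) + 1) (by omega),
        path_restrict x z (N + N') u hu0 huM (k := (j : ℕ) + 2) (by omega)]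
    have hext := hw (((j : ℕ) : ℤ) + 1)
    have e0 : u ((j : ℕ)) = w (((j : ℕ) : ℤ) + 1 - 1) := congrArg w (by push_cast; ring)
    have e1 : u ((j : ℕ) + 1) = w (((j : ℕ) : ℤ) + 1) := congrArg w (by push_cast; ring)
    have e2 : u ((j : ℕ) + 2) = w (((j : ℕ) : ℤ) + 1 + 1) := congrArg w (by push_cast; ring)
    rw [e0, e1, e2]
    exact hext
  have hzwc : zw = c := hcuniq zw hcrit
  have hNlt : N - 1 < N + N' - 1 := by omega
  have hzwN : zw ⟨N - 1, hNlt⟩ = w (N : ℤ) := by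
    rw [hzw]
    exact congrArg w (by simp only [Fin.val_mk]; push_cast; omega)
  constructor
  · intro heq
    obtain ⟨c1, e1, m1⟩ := AN_attained h x y hN
    obtain ⟨c2, e2, m2⟩ := AN_attained h y z hN'
    have hglue : fixedAct S x z (N + N') (glue y c1 c2) = AN S N x y + AN S N' y z := by
      rw [concat hN hN' x y z c1 c2, e1, e2]
    have hmin : ∀ v, fixedAct S x z (N + N') (glue y c1 c2) ≤ fixedAct S x z (N + N') v := by
      intro v
      rw [hglue, ← heq, hANM]
      exact hcmin v
    have hloc : IsLocalMin (fixedAct S x z (N + N')) (glue y c1 c2) :=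
      Filter.Eventually.of_forall hmin
    have hFd0 := hloc.hasFDerivAt_eq_zero (hasFDerivAt_fixedAct hC2 x z (N + N') (glue y c1 c2))
    have hg0 : fderiv ℝ (fixedAct S x z (N + N')) (glue y c1 c2) = 0 := by
      rw [(hasFDerivAt_fixedAct hC2 x z (N + N') (glue y c1 c2)).fderiv]
      exact hFd0
    have hgc : glue y c1 c2 = c := hcuniq _ hg0
    have hgy : glue y c1 c2 ⟨N - 1, hNlt⟩ = y := by
      unfold StmtAux.glue
      rw [dif_neg (by simp only [Fin.val_mk]; omega), dif_pos (by simp only [Fin.val_mk])]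
    calc y = glue y c1 c2 ⟨N - 1, hNlt⟩ := hgy.symm
      _ = c ⟨N - 1, hNlt⟩ := by rw [hgc]
      _ = zw ⟨N - 1, hNlt⟩ := by rw [hzwc]
      _ = w (N : ℤ) := hzwN
  · intro hy
    set zw1 : Fin (N - 1) → Ed d := fun j => u ((j : ℕ) + 1) with hzw1
    set zw2 : Fin (N' - 1) → Ed d := fun j => u (N + (j : ℕ) + 1) with hzw2
    have hg : glue (u N) zw1 zw2 = zw := by
      funext i
      have hi := i.isLt
      unfold StmtAux.glue
      by_cases h1 : (i : ℕ) < N - 1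
      · rw [dif_pos h1, hzw1, hzw]
      · rw [dif_neg h1]
        by_cases h2 : (i : ℕ) = N - 1
        · rw [dif_pos h2, hzw]
          exact congrArg u (by omega)
        · rw [dif_neg h2, hzw2, hzw]
          exact congrArg u (by simp only [Fin.val_mk]; omega)
    have hsum : AN S (N + N') x z = fixedAct S x (u N) N zw1 + fixedAct S (u N) z N' zw2 := by
      rw [hANM, ← hzwc, ← hg, concat hN hN' x (u N) z zw1 zw2]
    have h1 : AN S N x (u N) ≤ fixedAct S x (u N) N zw1 := AN_le h x (u N) hN zw1
    have h2 : AN S N' (u N) z ≤ fixedAct S (u N) z N' zw2 := AN_le h (u N) z hN' zw2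
    have hyu : y = u N := by rw [hy, hu]
    have htri := triangle h x (u N) z hN hN' (S := S)
    rw [hyu]
    linarith

end
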